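/- Let G be a graph with girth at least 10·h·l. Suppose H₀ ⊆ G is a path of length l, and for 1 ≤ j ≤ h, H_j is obtained from H_{j-1} by adding paths of length l each of which intersects H_{j-1}. Then each H_j has diameter at most (2j+1)·l and is a tree (acyclic). -/

import Mathlib

open SimpleGraph

namespace Stmt16Aux
set_option linter.unusedVariables false

variable {V : Type*} {G : SimpleGraph V}

/-- prefix of a walk -/
def wtake : ∀ {u v : V} (p : G.Walk u v) (n : ℕ), G.Walk u (p.getVert n)
  | _, _, .nil, _ => .nil
  | _, _, .cons h _, 0 => .nil
  | _, _, .cons h q, (n+1) => Walk.cons h (wtake q n)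

lemma wtake_support : ∀ {u v : V} (p : G.Walk u v) (n : ℕ),
    (wtake p n).support = p.support.take (n+1)
  | _, _, .nil, n => by simp [wtake]
  | _, _, .cons h q, 0 => by simp [wtake]; rfl
  | _, _, .cons h q, (n+1) => by
      simp [wtake, wtake_support q n]

lemma wtake_length : ∀ {u v : V} (p : G.Walk u v) (n : ℕ),
    (wtake p n).length = min n p.length
  | _, _, .nil, n => by simp [wtake]
  | _, _, .cons h q, 0 => by simp [wtake]; rfl
  | _, _, .cons h q, (n+1) => by
      simp [wtake, wtake_length q n, Nat.succ_min_succ]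

/-- lift a walk into a subgraph containing it -/
lemma exists_lift {H : G.Subgraph} : ∀ {u v : V} (w : G.Walk u v),
    w.toSubgraph ≤ H → ∀ (hu : u ∈ H.verts) (hv : v ∈ H.verts),
    ∃ w' : H.coe.Walk ⟨u, hu⟩ ⟨v, hv⟩, w'.map H.hom = w
  | _, _, .nil, _, hu, hv => ⟨.nil, rfl⟩
  | _, _, @Walk.cons _ _ a b c hadj0 q, hw, hu, hv => by
      rw [Walk.toSubgraph, sup_le_iff] at hw
      have hb : b ∈ H.verts := hw.2.1 q.start_mem_verts_toSubgraph
      have hadj : H.Adj a b := hw.1.2 (by simp)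
      obtain ⟨w', hw'⟩ := exists_lift q hw.2 hb hv
      exact ⟨Walk.cons (by exact hadj) w', by subst hw'; rfl⟩

/-- a short walk between any two vertices of a path subgraph -/
lemma walk_in_toSubgraph {a b : V} (p : G.Walk a b) (x y : p.toSubgraph.verts) :
    ∃ w : p.toSubgraph.coe.Walk x y, w.length ≤ p.length := by
  classical
  obtain ⟨w0⟩ := (p.toSubgraph_connected).coe x y
  refine ⟨w0.bypass, ?_⟩
  have hnd : (w0.bypass.support.map Subtype.val).Nodup :=
    (Walk.bypass_isPath w0).support_nodup.map Subtype.val_injective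
  have hsub : (w0.bypass.support.map Subtype.val) ⊆ p.support := by
    intro z hz
    simp only [List.mem_map] at hz
    obtain ⟨⟨z', hz'⟩, hmem, rfl⟩ := hz
    exact (p.mem_verts_toSubgraph).mp hz'
  have := (List.subperm_of_subset hnd hsub).length_le
  simp only [List.length_map, Walk.length_support] at this
  omega

lemma cycle_prefix_path {W : Type*} {Γ : SimpleGraph W} {x : W} {c : Γ.Walk x x}
    (hc : c.IsCycle) {m : ℕ} (hm : 1 ≤ m) (hlt : m < c.length) :
    ∃ (b : W) (p : Γ.Walk x b), p.IsPath ∧ p.length = m := by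
  cases c with
  | nil => simp at hlt
  | @cons _ y _ hadj t =>
    have htnd : t.support.Nodup := by simpa using hc.support_nodup
    have htpath : t.IsPath := Walk.IsPath.mk' htnd
    have hmt : m ≤ t.length := by
      simp only [Walk.length_cons] at hlt; omega
    set m' := m - 1 with hm'
    have ht1len : (wtake t m').length = m' := by
      rw [wtake_length]; omega
    have ht1supp : (wtake t m').support = t.support.take (m' + 1) := wtake_support t m'
    have ht1nd : (wtake t m').support.Nodup := by
      rw [ht1supp]; exact (List.take_sublist _ _).nodup htnd
    have hxnot : x ∉ (wtake t m').support := by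
      rw [ht1supp]
      intro hxin
      have hdropne : t.support.drop (m' + 1) ≠ [] := by
        intro hnil
        have := congrArg List.length hnil
        simp only [List.length_drop, Walk.length_support, List.length_nil] at this
        omega
      have hxdrop : x ∈ t.support.drop (m' + 1) := by
        have h1 : (t.support.take (m' + 1) ++ t.support.drop (m' + 1)).getLast
            (List.append_ne_nil_of_right_ne_nil _ hdropne) = x := by
          have h2 := t.getLast_support
          rw [List.getLast_congr _ _ (List.take_append_drop (m' + 1) t.support)]
          exact h2
        rw [List.getLast_append_of_right_ne_nil _ _ hdropne] at h1
        have h3 := List.getLast_mem hdropne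
        rwa [h1] at h3
      have htnd2 : (t.support.take (m' + 1) ++ t.support.drop (m' + 1)).Nodup := by
        rw [List.take_append_drop]; exact htnd
      exact (List.nodup_append'.mp htnd2).2.2 hxin hxdrop
    refine ⟨_, Walk.cons hadj (wtake t m'), ?_, ?_⟩
    · rw [Walk.cons_isPath_iff]
      exact ⟨Walk.IsPath.mk' ht1nd, hxnot⟩
    · simp only [Walk.length_cons, ht1len]; omega

end Stmt16Aux


namespace Stmt16Aux
set_option linter.unusedVariables false

variable {W : Type*} {Γ : SimpleGraph W}

/-- two paths between the same endpoints are equal if all cycles are long -/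
lemma paths_eq {a b : W} (p q : Γ.Walk a b) (hp : p.IsPath) (hq : q.IsPath)
    (hbig : ∀ (x : W) (c : Γ.Walk x x), c.IsCycle → p.length + q.length + 2 < c.length) :
    p = q := by
  set D := p.toSubgraph ⊔ q.toSubgraph with hD
  have hDa : D.coe.IsAcyclic := by
    intro x c hc
    have hc' : (c.map D.hom).IsCycle := hc.map Subgraph.hom_injective
    have hlen := hbig _ _ hc'
    rw [Walk.length_map] at hlen
    -- count: c.length ≤ p.length + q.length + 2
    have hnd : (c.support.tail.map Subtype.val).Nodup :=
      hc.support_nodup.map Subtype.val_injective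
    have hsub : (c.support.tail.map Subtype.val) ⊆ p.support ++ q.support := by
      intro z hz
      simp only [List.mem_map] at hz
      obtain ⟨⟨z', hz'⟩, hmem, rfl⟩ := hz
      rw [hD, Subgraph.verts_sup] at hz'
      rw [List.mem_append]
      rcases hz' with hz' | hz'
      · exact Or.inl ((Walk.mem_verts_toSubgraph p).mp hz')
      · exact Or.inr ((Walk.mem_verts_toSubgraph q).mp hz')
    have hle := (List.subperm_of_subset hnd hsub).length_le
    have h1 : c.support.tail.length = c.length := by
      have := c.length_support
      simp only [List.length_tail, this]
      omega
    simp only [List.length_map, List.length_append, Walk.length_support, h1] at hle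
    omega
  have hup : p.toSubgraph ≤ D := le_sup_left
  have huq : q.toSubgraph ≤ D := le_sup_right
  have ha : a ∈ D.verts := hup.1 p.start_mem_verts_toSubgraph
  have hb : b ∈ D.verts := hup.1 p.end_mem_verts_toSubgraph
  obtain ⟨p', hp'⟩ := Stmt16Aux.exists_lift p hup ha hb
  obtain ⟨q', hq'⟩ := Stmt16Aux.exists_lift q huq ha hb
  have hp'path : p'.IsPath := Walk.IsPath.of_map (f := D.hom) (by rw [hp']; exact hp)
  have hq'path : q'.IsPath := Walk.IsPath.of_map (f := D.hom) (by rw [hq']; exact hq)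
  have : (⟨p', hp'path⟩ : D.coe.Path _ _) = ⟨q', hq'path⟩ := hDa.path_unique _ _
  have hpq : p' = q' := congrArg Subtype.val this
  rw [← hp', ← hq', hpq]

end Stmt16Aux



open SimpleGraph in
/-- Let `G` have girth at least `10·h·l`. Suppose `H 0 ⊆ G` is a path of length `l`, and
for `1 ≤ j ≤ h`, `H j` is obtained from `H (j-1)` by adding a collection of paths of
length `l`, each sharing a vertex with `H (j-1)`. Then each `H j` (`j ≤ h`) is a tree
and has diameter at most `(2j+1)·l`. -/
theorem stmt16 {V : Type*} (G : SimpleGraph V) (h l : ℕ) (hh : 1 ≤ h) (hl : 1 ≤ l)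
    (hgirth : ((10 * h * l : ℕ) : ℕ∞) ≤ G.girth)
    (H : ℕ → G.Subgraph)
    (h0 : ∃ (u v : V) (p : G.Walk u v), p.IsPath ∧ p.length = l ∧ H 0 = p.toSubgraph)
    (hstep : ∀ j, 1 ≤ j → j ≤ h → ∃ S : Set G.Subgraph,
      (∀ W ∈ S, (∃ (u v : V) (p : G.Walk u v),
            p.IsPath ∧ p.length = l ∧ W = p.toSubgraph) ∧
          (W.verts ∩ (H (j - 1)).verts).Nonempty) ∧
      H j = H (j - 1) ⊔ sSup S) :
    ∀ j ≤ h, (H j).coe.IsTree ∧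
      ∀ x y : (H j).verts, (H j).coe.dist x y ≤ (2 * j + 1) * l := by
  classical
  obtain ⟨u0, v0, p0, hp0, hp0len, hH0⟩ := h0
  have hk : 1 ≤ h * l := by
    calc 1 = 1 * 1 := by ring
    _ ≤ h * l := Nat.mul_le_mul hh hl
  -- every cycle in a subgraph of G has length at least 10*(h*l)
  have hcyc : ∀ (D : G.Subgraph) (x : D.verts) (c : D.coe.Walk x x), c.IsCycle →
      10 * (h * l) ≤ c.length := by
    intro D x c hc
    have hc' : (c.map D.hom).IsCycle := hc.map Subgraph.hom_injective
    have h1 : G.egirth ≤ ((c.map D.hom).length : ℕ∞) :=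
      le_egirth.mp le_rfl _ _ hc'
    have h2 : ((G.girth : ℕ) : ℕ∞) ≤ G.egirth := ENat.coe_toNat_le_self _
    have h3 : ((10 * h * l : ℕ) : ℕ∞) ≤ ((c.map D.hom).length : ℕ∞) :=
      le_trans (le_trans hgirth h2) h1
    rw [Nat.cast_le, Walk.length_map] at h3
    calc 10 * (h * l) = 10 * h * l := by ring
    _ ≤ c.length := h3
  -- key claim
  have key : ∀ j, j ≤ h → (H j).verts.Nonempty ∧
      ∀ x y : (H j).verts, ∃ w : (H j).coe.Walk x y, w.length ≤ (2 * j + 1) * l := by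
    intro j
    induction j with
    | zero =>
      intro _
      rw [hH0]
      constructor
      · exact ⟨u0, p0.start_mem_verts_toSubgraph⟩
      · intro x y
        obtain ⟨w, hw⟩ := Stmt16Aux.walk_in_toSubgraph p0 x y
        refine ⟨w, ?_⟩
        rw [hp0len] at hw
        omega
    | succ j ih =>
      intro hj1
      obtain ⟨hne, hwalk⟩ := ih (Nat.le_of_succ_le hj1)
      obtain ⟨S, hS, hHj⟩ := hstep (j + 1) (Nat.le_add_left 1 j) hj1
      rw [Nat.add_sub_cancel] at hHj
      have hle : H j ≤ H (j + 1) := by rw [hHj]; exact le_sup_left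
      constructor
      · obtain ⟨z, hz⟩ := hne; exact ⟨z, hle.1 hz⟩
      · have claim : ∀ x : (H (j + 1)).verts, ∃ (z : V) (hz : z ∈ (H j).verts)
            (w : (H (j + 1)).coe.Walk x ⟨z, hle.1 hz⟩), w.length ≤ l := by
          rintro ⟨x, hx⟩
          have hx' := hx
          rw [hHj, Subgraph.verts_sup] at hx'
          rcases hx' with hx' | hx'
          · exact ⟨x, hx', Walk.nil, by simp⟩
          · rw [Subgraph.verts_sSup] at hx'
            simp only [Set.mem_iUnion] at hx'
            obtain ⟨W, hWS, hxW⟩ := hx'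
            obtain ⟨⟨a, b, pw, hpw, hpwlen, hWeq⟩, ⟨z, hzW, hzHj⟩⟩ := hS W hWS
            have hWle : W ≤ H (j + 1) := by
              rw [hHj]; exact le_trans (le_sSup hWS) le_sup_right
            subst hWeq
            obtain ⟨w0, hw0⟩ := Stmt16Aux.walk_in_toSubgraph pw ⟨x, hxW⟩ ⟨z, hzW⟩
            refine ⟨z, hzHj, w0.map (Subgraph.inclusion hWle), ?_⟩
            have e := Walk.length_map (Subgraph.inclusion hWle) w0
            exact e.trans_le (le_of_le_of_eq hw0 hpwlen)
        intro x y
        obtain ⟨zx, hzx, wx, hwx⟩ := claim x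
        obtain ⟨zy, hzy, wy, hwy⟩ := claim y
        obtain ⟨w0, hw0⟩ := hwalk ⟨zx, hzx⟩ ⟨zy, hzy⟩
        refine ⟨wx.append ((w0.map (Subgraph.inclusion hle)).append wy.reverse), ?_⟩
        have e1 := Walk.length_append wx ((w0.map (Subgraph.inclusion hle)).append wy.reverse)
        have e2 := Walk.length_append (w0.map (Subgraph.inclusion hle)) wy.reverse
        have e3 := Walk.length_map (Subgraph.inclusion hle) w0
        have e4 := Walk.length_reverse wy
        have heq : (2 * (j + 1) + 1) * l = l + ((2 * j + 1) * l + l) := by ring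
        rw [heq]
        refine e1.trans_le (add_le_add hwx ?_)
        refine e2.trans_le (add_le_add ?_ ?_)
        · exact e3.trans_le hw0
        · exact e4.trans_le hwy
  intro j hj
  obtain ⟨hne, hwalk⟩ := key j hj
  have hconn : (H j).coe.Connected := by
    rw [connected_iff]
    refine ⟨fun x y => ?_, ?_⟩
    · obtain ⟨w, _⟩ := hwalk x y
      exact ⟨w⟩
    · obtain ⟨z, hz⟩ := hne
      exact ⟨⟨z, hz⟩⟩
  have hac : (H j).coe.IsAcyclic := by
    intro x c hc
    have h10 : 10 * (h * l) ≤ c.length := hcyc (H j) x c hc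
    obtain ⟨b, p1, hp1, hp1len⟩ := Stmt16Aux.cycle_prefix_path hc
      (m := 4 * (h * l)) (by omega) (by omega)
    obtain ⟨w, hwlen⟩ := hwalk x b
    have hwb : w.bypass.IsPath := Walk.bypass_isPath w
    have hwblen : w.bypass.length ≤ 3 * (h * l) := by
      have h1 := Walk.length_bypass_le w
      have h2 : (2 * j + 1) * l ≤ 3 * (h * l) := by
        calc (2 * j + 1) * l ≤ (3 * h) * l := Nat.mul_le_mul_right l (by omega)
        _ = 3 * (h * l) := by ring
      omega
    have heq := Stmt16Aux.paths_eq p1 w.bypass hp1 hwb (by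
      intro z c' hc'
      have h10' := hcyc (H j) z c' hc'
      omega)
    rw [heq] at hp1len
    omega
  refine ⟨⟨hconn, hac⟩, fun x y => ?_⟩
  obtain ⟨w, hw⟩ := hwalk x y
  exact le_trans (SimpleGraph.dist_le w) hw
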